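/- Let A be a flat layout and N a positive integer. Then there exists an N-complement of A if and only if A is N-complementable. -/

import Mathlib

/-- A flat layout, represented as its list of modes `(sᵢ, dᵢ)`:
the first component of each mode is a shape entry, the second a stride entry. -/
abbrev FlatLayout := List (ℕ × ℕ)

namespace FlatLayout

/-- Validity of a flat layout: every shape entry is a positive integer. -/
def Valid (L : FlatLayout) : Prop := ∀ p ∈ L, 0 < p.1

/-- The size of a flat layout: the product of its shape entries. -/
def size (L : FlatLayout) : ℕ := (L.map Prod.fst).prod

/-- The cosize of a flat layout: `1 + Σ (sᵢ - 1) * dᵢ`. -/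
def cosize (L : FlatLayout) : ℕ := 1 + (L.map fun p => (p.1 - 1) * p.2).sum

/-- The rank of a flat layout: its number of modes. -/
def rank (L : FlatLayout) : ℕ := L.length

/-- The layout function `Φ_L`: `Φ_L(x) = Σ xᵢ·dᵢ` where
`xᵢ = ⌊x / (s₁⋯sᵢ₋₁)⌋ mod sᵢ`. -/
def phi : FlatLayout → ℕ → ℕ
  | [], _ => 0
  | (s, d) :: rest, x => x % s * d + phi rest (x / s)

/-- `squeeze L` deletes every mode whose shape entry equals `1`. -/
def squeeze (L : FlatLayout) : FlatLayout := L.filter fun p => p.1 != 1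

/-- `filterZeros L` deletes every mode whose stride entry equals `0`. -/
def filterZeros (L : FlatLayout) : FlatLayout := L.filter fun p => p.2 != 0

/-- The ordering on modes: `(s,d) ⪯ (s',d')` iff `d < d'`, or `d = d'` and `s ≤ s'`. -/
def ModeLE (p q : ℕ × ℕ) : Prop := p.2 < q.2 ∨ (p.2 = q.2 ∧ p.1 ≤ q.1)

instance : DecidableRel ModeLE := fun p q => by unfold ModeLE; infer_instance

/-- A flat layout is sorted if its consecutive modes are `⪯`-increasing. -/
def Sorted (L : FlatLayout) : Prop := L.Chain' ModeLE

/-- `sortL L` stably sorts the modes of `L` with respect to `⪯`. -/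
def sortL (L : FlatLayout) : FlatLayout := L.mergeSort fun p q => decide (ModeLE p q)

/-- A flat layout is coalesced if no shape entry equals `1` and
for consecutive modes, `sᵢ·dᵢ ≠ dᵢ₊₁`. -/
def Coalesced (L : FlatLayout) : Prop :=
  (∀ p ∈ L, p.1 ≠ 1) ∧ L.Chain' fun p q => p.1 * p.2 ≠ q.2

/-- Combine adjacent modes `(s,d), (s',d')` with `d' = s·d` into `(s·s', d)`, repeatedly. -/
def coalAux : List (ℕ × ℕ) → List (ℕ × ℕ)
  | [] => []
  | p :: rest =>
    match coalAux rest with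
    | [] => [p]
    | q :: rest' =>
        if p.1 * p.2 = q.2 then (p.1 * q.1, p.2) :: rest' else p :: q :: rest'

/-- Coalesce of a flat layout: squeeze, then repeatedly combine adjacent modes
`(s,d), (s',d')` with `d' = s·d` into `(s·s', d)`. -/
def coal (L : FlatLayout) : FlatLayout := coalAux (squeeze L)

/-- Compactness: the layout function takes values in `{0, …, cosize L - 1}` and induces a
bijection `{0, …, size L - 1} → {0, …, cosize L - 1}`. -/
def Compact (L : FlatLayout) : Prop :=
  Set.BijOn (phi L) {x | x < size L} {y | y < cosize L}

/-- `B` is a complement of `A` (written `A ⊥ B`) if the concatenation `A ⋆ B` is compact. -/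
def Perp (A B : FlatLayout) : Prop := Compact (A ++ B)

/-- `A` is complementable if, writing `sort(squeeze A) = (s₁,…,sₘ):(d₁,…,dₘ)`,
`sᵢ·dᵢ` divides `dᵢ₊₁` for all `1 ≤ i < m`. -/
def Complementable (A : FlatLayout) : Prop :=
  (sortL (squeeze A)).Chain' fun p q => p.1 * p.2 ∣ q.2

/-- `B` is an `N`-complement of `A` if `B` is a complement of `A`
and `size A * size B = N`. -/
def IsNComplement (A B : FlatLayout) (N : ℕ) : Prop :=
  Perp A B ∧ size A * size B = N

/-- `A` is `N`-complementable if, writing `sort(squeeze A) = (s₁,…,sₘ):(d₁,…,dₘ)`,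
`sᵢ·dᵢ ∣ dᵢ₊₁` for all `1 ≤ i < m`, and `sₘ·dₘ ∣ N`. -/
def NComplementable (A : FlatLayout) (N : ℕ) : Prop :=
  ((sortL (squeeze A)).Chain' fun p q => p.1 * p.2 ∣ q.2) ∧
  ∀ p, (sortL (squeeze A)).getLast? = some p → p.1 * p.2 ∣ N

/-- Given `l = [(s₁,d₁),…,(sₘ,dₘ)]`, the layout
`C = (d₁, d₂/(s₁d₁), …, dₘ/(sₘ₋₁dₘ₋₁)) : (1, s₁d₁, …, sₘ₋₁dₘ₋₁)`. -/
def compModes (l : List (ℕ × ℕ)) : List (ℕ × ℕ) :=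
  match l with
  | [] => []
  | (_, d₁) :: t =>
      (d₁, 1) :: (l.zip t).map fun pq => (pq.2.2 / (pq.1.1 * pq.1.2), pq.1.1 * pq.1.2)

/-- The complement `comp A = coal C` of a complementable flat layout `A`. -/
def comp (A : FlatLayout) : FlatLayout := coal (compModes (sortL (squeeze A)))

/-- Given `l = [(s₁,d₁),…,(sₘ,dₘ)]` and `N`, the layout
`C = (d₁, d₂/(s₁d₁), …, dₘ/(sₘ₋₁dₘ₋₁), N/(sₘdₘ)) : (1, s₁d₁, …, sₘ₋₁dₘ₋₁, sₘdₘ)`. -/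
def compNModes (l : List (ℕ × ℕ)) (N : ℕ) : List (ℕ × ℕ) :=
  match l.getLast? with
  | none => [(N, 1)]
  | some (sm, dm) => compModes l ++ [(N / (sm * dm), sm * dm)]

/-- The `N`-complement `comp(A, N) = coal C` of an `N`-complementable flat layout `A`. -/
def compN (A : FlatLayout) (N : ℕ) : FlatLayout :=
  coal (compNModes (sortL (squeeze A)) N)

/-- `L` is tractable if, writing `sort L = (s₁,…,sₘ):(d₁,…,dₘ)`, for every `1 ≤ i < m`
either `dᵢ = 0` or `sᵢ·dᵢ` divides `dᵢ₊₁`. -/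
def Tractable (L : FlatLayout) : Prop :=
  (sortL L).Chain' fun p q => p.2 = 0 ∨ p.1 * p.2 ∣ q.2

end FlatLayout


namespace FlatLayout

/-- multiset of values of the layout function -/

def msum : FlatLayout → Multiset ℕ
  | [] => {0}
  | (s, d) :: rest => (Multiset.range s).bind fun r => (msum rest).map (r * d + ·)

theorem msum_cons (s d : ℕ) (t : FlatLayout) :
    msum ((s, d) :: t) = (Multiset.range s).bind fun r => (msum t).map (r * d + ·) := rfl

theorem size_nil : size ([] : FlatLayout) = 1 := rfl
theorem size_cons (p : ℕ × ℕ) (L : FlatLayout) : size (p :: L) = p.1 * size L := by simp [size]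
theorem size_append (A B : FlatLayout) : size (A ++ B) = size A * size B := by simp [size]

theorem size_pos {L : FlatLayout} (h : Valid L) : 0 < size L := by
  induction L with
  | nil => simp [size]
  | cons p t ih =>
    rw [size_cons]
    exact Nat.mul_pos (h p (by simp)) (ih fun q hq => h q (by simp [hq]))

theorem size_perm {A B : FlatLayout} (h : A.Perm B) : size A = size B :=
  (h.map Prod.fst).prod_eq

theorem valid_of_perm {A B : FlatLayout} (h : A.Perm B) (hA : Valid A) : Valid B :=
  fun p hp => hA p (h.mem_iff.2 hp)

theorem size_squeeze {L : FlatLayout} (h : Valid L) : size (squeeze L) = size L := by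
  induction L with
  | nil => rfl
  | cons p t ih =>
    have ih' := ih fun q hq => h q (by simp [hq])
    by_cases hp : p.1 = 1
    · have : squeeze (p :: t) = squeeze t := by simp [squeeze, List.filter_cons, hp]
      rw [this, ih', size_cons, hp, one_mul]
    · have : squeeze (p :: t) = p :: squeeze t := by simp [squeeze, List.filter_cons, hp]
      rw [this, size_cons, size_cons, ih']

theorem squeeze_append (A B : FlatLayout) : squeeze (A ++ B) = squeeze A ++ squeeze B :=
  List.filter_append _ _

theorem valid_squeeze {L : FlatLayout} (h : Valid L) : Valid (squeeze L) :=
  fun p hp => h p (List.mem_of_mem_filter hp)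

theorem cosize_cons (p : ℕ × ℕ) (L : FlatLayout) :
    cosize (p :: L) = (p.1 - 1) * p.2 + cosize L := by simp [cosize]; omega

theorem cosize_pos (L : FlatLayout) : 0 < cosize L := by simp [cosize]

theorem zero_mem_msum {L : FlatLayout} (h : Valid L) : 0 ∈ msum L := by
  induction L with
  | nil => simp [msum]
  | cons p t ih =>
    obtain ⟨s, d⟩ := p
    have hs : 0 < s := h (s, d) (by simp)
    have h0 : 0 ∈ msum t := ih fun q hq => h q (by simp [hq])
    simp only [msum_cons, Multiset.mem_bind, Multiset.mem_map, Multiset.mem_range]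
    exact ⟨0, hs, 0, h0, by simp⟩

theorem card_msum (L : FlatLayout) : Multiset.card (msum L) = size L := by
  induction L with
  | nil => rfl
  | cons p t ih =>
    obtain ⟨s, d⟩ := p
    simp [msum_cons, size_cons, Multiset.card_bind, Function.comp_def, ih,
      Multiset.map_const', Multiset.sum_replicate]

theorem msum_lb {e : ℕ} {L : FlatLayout} (h : ∀ p ∈ L, e ≤ p.2) :
    ∀ z ∈ msum L, z = 0 ∨ e ≤ z := by
  induction L with
  | nil => intro z hz; left; simpa [msum] using hz
  | cons p t ih =>
    obtain ⟨s, d⟩ := p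
    intro z hz
    simp only [msum_cons, Multiset.mem_bind, Multiset.mem_map, Multiset.mem_range] at hz
    obtain ⟨r, hr, w, hw, rfl⟩ := hz
    rcases ih (fun q hq => h q (by simp [hq])) w hw with rfl | hew
    · rcases Nat.eq_zero_or_pos r with rfl | hr0
      · left; simp
      · right
        have hed : e ≤ d := h (s, d) (by simp)
        have : d ≤ r * d := Nat.le_mul_of_pos_left d hr0
        omega
    · right; omega

theorem msum_lt_cosize {L : FlatLayout} (h : Valid L) : ∀ z ∈ msum L, z < cosize L := by
  induction L with
  | nil => intro z hz; simp [msum] at hz; simp [hz, cosize]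
  | cons p t ih =>
    obtain ⟨s, d⟩ := p
    intro z hz
    simp only [msum_cons, Multiset.mem_bind, Multiset.mem_map, Multiset.mem_range] at hz
    obtain ⟨r, hr, w, hw, rfl⟩ := hz
    have hw' : w < cosize t := ih (fun q hq => h q (by simp [hq])) w hw
    have h1 : r * d ≤ (s - 1) * d := Nat.mul_le_mul_right d (by omega)
    rw [cosize_cons]
    simp only at h1 ⊢
    omega

theorem cosize_pred_mem {L : FlatLayout} (h : Valid L) : cosize L - 1 ∈ msum L := by
  induction L with
  | nil => simp [msum, cosize]
  | cons p t ih =>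
    obtain ⟨s, d⟩ := p
    have hs : 0 < s := h (s, d) (by simp)
    have hmem : cosize t - 1 ∈ msum t := ih fun q hq => h q (by simp [hq])
    have hct : 0 < cosize t := cosize_pos t
    have heq : cosize ((s, d) :: t) - 1 = (s - 1) * d + (cosize t - 1) := by
      rw [cosize_cons]; simp only; omega
    rw [heq]
    simp only [msum_cons, Multiset.mem_bind, Multiset.mem_map, Multiset.mem_range]
    exact ⟨s - 1, by omega, cosize t - 1, hmem, rfl⟩


theorem msum_swap (p q : ℕ × ℕ) (X : FlatLayout) : msum (p :: q :: X) = msum (q :: p :: X) := by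
  obtain ⟨s, d⟩ := p; obtain ⟨s', d'⟩ := q
  simp only [msum_cons, Multiset.map_bind, Multiset.map_map, Function.comp_def]
  rw [Multiset.bind_bind]
  apply Multiset.bind_congr; intro r' _
  apply Multiset.bind_congr; intro r _
  apply Multiset.map_congr rfl; intro z _
  omega

theorem msum_perm : ∀ {L L' : FlatLayout}, L.Perm L' → msum L = msum L' := by
  intro L L' h
  induction h with
  | nil => rfl
  | cons x _ ih => obtain ⟨s, d⟩ := x; simp [msum_cons, ih]
  | swap x y l => exact msum_swap y x l
  | trans _ _ ih1 ih2 => exact ih1.trans ih2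

theorem msum_append : ∀ A B : FlatLayout,
    msum (A ++ B) = (msum A).bind fun a => (msum B).map (a + ·)
  | [], B => by simp [msum, Multiset.singleton_bind]
  | (s, d) :: t, B => by
    simp only [List.cons_append, msum_cons, msum_append t B, Multiset.map_bind,
      Multiset.bind_assoc, Multiset.bind_map, Multiset.map_map, Function.comp_def]
    apply Multiset.bind_congr; intro r _
    apply Multiset.bind_congr; intro a _
    apply Multiset.map_congr rfl; intro z _
    omega

theorem msum_squeeze : ∀ A : FlatLayout, msum (squeeze A) = msum A
  | [] => rfl
  | (s, d) :: t => by
    by_cases h : s = 1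
    · subst h
      have h1 : squeeze ((1, d) :: t) = squeeze t := by simp [squeeze, List.filter_cons]
      rw [h1, msum_squeeze t]
      have : Multiset.range 1 = {0} := rfl
      simp [msum_cons, this, Multiset.singleton_bind]
    · have h1 : squeeze ((s, d) :: t) = (s, d) :: squeeze t := by
        simp [squeeze, List.filter_cons, h]
      rw [h1, msum_cons, msum_cons, msum_squeeze t]

theorem range_mul' (a : ℕ) : ∀ b : ℕ,
    Multiset.range (a * b) = (Multiset.range a).bind fun r => (Multiset.range b).map fun q => r + a * q
  | 0 => by simp
  | b + 1 => by
    rw [Nat.mul_succ, Multiset.range_add, range_mul' a b, Multiset.range_succ]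
    simp only [Multiset.map_cons, Multiset.bind_cons]
    rw [add_comm]
    congr 1
    exact Multiset.map_congr rfl fun x _ => by omega

theorem msum_phi : ∀ L : FlatLayout, Valid L →
    msum L = (Multiset.range (size L)).map (phi L)
  | [], _ => by simp [msum, size, phi, Multiset.replicate_one]
  | (s, d) :: t, h => by
    have hs : 0 < s := h (s, d) (by simp)
    have IH := msum_phi t (fun q hq => h q (by simp [hq]))
    rw [size_cons]
    show msum ((s, d) :: t) = (Multiset.range (s * size t)).map (phi ((s, d) :: t))
    rw [range_mul' s (size t), Multiset.map_bind]
    simp only [Multiset.map_map, Function.comp_def, msum_cons, IH]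
    apply Multiset.bind_congr; intro r hr
    have hr' : r < s := by simpa using hr
    apply Multiset.map_congr rfl; intro q _
    show r * d + phi t q = phi ((s, d) :: t) (r + s * q)
    simp only [phi]
    rw [Nat.add_mul_mod_self_left, Nat.add_mul_div_left _ _ hs,
      Nat.mod_eq_of_lt hr', Nat.div_eq_of_lt hr', Nat.zero_add]

theorem compact_iff {L : FlatLayout} (h : Valid L) :
    Compact L ↔ msum L = Multiset.range (cosize L) := by
  rw [msum_phi L h]
  constructor
  · rintro ⟨hmaps, hinj, hsurj⟩
    have hnodup : ((Multiset.range (size L)).map (phi L)).Nodup :=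
      Multiset.Nodup.map_on
        (fun x hx y hy hxy => hinj (by simpa using hx) (by simpa using hy) hxy)
        (Multiset.nodup_range _)
    rw [Multiset.Nodup.ext hnodup (Multiset.nodup_range _)]
    intro y
    simp only [Multiset.mem_map, Multiset.mem_range]
    constructor
    · rintro ⟨x, hx, rfl⟩; exact hmaps hx
    · intro hy; obtain ⟨x, hx, hxy⟩ := hsurj hy; exact ⟨x, hx, hxy⟩
  · intro heq
    refine ⟨?_, ?_, ?_⟩
    · intro x hx
      have : phi L x ∈ Multiset.range (cosize L) :=
        heq ▸ Multiset.mem_map_of_mem _ (by simpa using hx)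
      simpa using this
    · intro x hx y hy hxy
      have hnd : ((Multiset.range (size L)).map (phi L)).Nodup :=
        heq ▸ Multiset.nodup_range _
      exact Multiset.inj_on_of_nodup_map hnd x (by simpa using hx) y (by simpa using hy) hxy
    · intro y hy
      have hy' : y ∈ (Multiset.range (size L)).map (phi L) :=
        heq ▸ (Multiset.mem_range.2 (by simpa using hy))
      obtain ⟨x, hx, rfl⟩ := Multiset.mem_map.1 hy'
      exact ⟨x, by simpa using hx, rfl⟩


-- part 3
/-- The tiling lemma: if `{0..t-1} ⊕ W = {0..t*K-1}` as multisets, then `W = t·{0..K-1}`. -/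
theorem tiling {t : ℕ} (ht : 0 < t) : ∀ (K : ℕ) (W : Multiset ℕ),
    ((Multiset.range t).bind fun r => W.map (r + ·)) = Multiset.range (t * K) →
    W = (Multiset.range K).map (t * ·) := by
  intro K
  induction K with
  | zero =>
    intro W h
    have hc := congrArg Multiset.card h
    simp only [Multiset.card_bind, Function.comp_def, Multiset.card_map,
      Multiset.map_const', Multiset.sum_replicate, Multiset.card_range, smul_eq_mul,
      Nat.mul_zero] at hc
    have : Multiset.card W = 0 := by
      rcases Nat.mul_eq_zero.1 hc with h' | h'
      · omega
      · exact h'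
    simp [Multiset.card_eq_zero.1 this]
  | succ K ih =>
    intro W h
    -- 0 ∈ W
    have h0m : (0 : ℕ) ∈ Multiset.range (t * (K + 1)) := by
      simp only [Multiset.mem_range]
      exact Nat.mul_pos ht (Nat.succ_pos K)
    rw [← h] at h0m
    simp only [Multiset.mem_bind, Multiset.mem_map, Multiset.mem_range] at h0m
    obtain ⟨r, hr, w, hw, hrw⟩ := h0m
    have hw0 : (0 : ℕ) ∈ W := by
      have : w = 0 := by omega
      rwa [this] at hw
    obtain ⟨W₀, rfl⟩ := Multiset.exists_cons_of_mem hw0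
    -- rewrite the hypothesis
    simp only [Multiset.map_cons, add_zero] at h
    rw [Multiset.bind_cons] at h
    have hmapid : Multiset.map (fun r : ℕ => r) (Multiset.range t) = Multiset.range t :=
      Multiset.map_id _
    rw [hmapid] at h
    have htK : t * (K + 1) = t + t * K := by ring
    rw [htK, Multiset.range_add] at h
    have h2 : ((Multiset.range t).bind fun r => W₀.map (r + ·)) =
        (Multiset.range (t * K)).map (t + ·) := by
      exact add_left_cancel h
    -- all elements of W₀ are ≥ t
    have hge : ∀ w ∈ W₀, t ≤ w := by
      intro w hw'
      have hmem : w ∈ (Multiset.range (t * K)).map (t + ·) := by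
        rw [← h2]
        simp only [Multiset.mem_bind, Multiset.mem_map, Multiset.mem_range]
        exact ⟨0, ht, w, hw', by simp⟩
      simp only [Multiset.mem_map, Multiset.mem_range] at hmem
      obtain ⟨q, _, hq⟩ := hmem
      omega
    set W₁ := W₀.map (· - t) with hW₁
    have hW0 : W₀ = W₁.map (t + ·) := by
      rw [hW₁, Multiset.map_map]
      have : Multiset.map ((t + ·) ∘ (· - t)) W₀ = Multiset.map id W₀ :=
        Multiset.map_congr rfl fun w hw' => by
          have := hge w hw'; simp [Function.comp_def]; omega
      rw [this, Multiset.map_id]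
    rw [hW0] at h2
    have h3 : ((Multiset.range t).bind fun r => W₁.map (r + ·)) = Multiset.range (t * K) := by
      apply Multiset.map_injective (add_right_injective t)
      rw [Multiset.map_bind, ← h2]
      apply Multiset.bind_congr; intro r _
      simp only [Multiset.map_map, Function.comp_def]
      exact Multiset.map_congr rfl fun z _ => by omega
    have h4 := ih W₁ h3
    rw [hW0, h4]
    have hrange : Multiset.range (K + 1) = 0 ::ₘ (Multiset.range K).map (· + 1) := by
      rw [show Multiset.range (K + 1) = ((List.range (K + 1) : List ℕ) : Multiset ℕ) from rfl,
        List.range_succ_eq_map]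
      show ((0 :: List.map Nat.succ (List.range K) : List ℕ) : Multiset ℕ) = _
      rw [← Multiset.cons_coe, ← Multiset.map_coe]
      rfl
    rw [hrange]
    simp only [Multiset.map_cons, Multiset.map_map, Function.comp_def, Nat.mul_zero]
    congr 1
    exact Multiset.map_congr rfl fun x _ => by ring

theorem chain_head_eq {a b : ℕ × ℕ} (hab : a.1 * a.2 = b.1 * b.2) {l : FlatLayout}
    (h : List.Chain (fun p q => p.1 * p.2 = q.2) a l) :
    List.Chain (fun p q => p.1 * p.2 = q.2) b l := by
  cases l with
  | nil => exact List.Chain.nil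
  | cons q t => rcases h with _ | _ | ⟨h1, h2⟩; exact List.Chain.cons (hab ▸ h1) h2

theorem chain_head_dvd {a b : ℕ × ℕ} (hab : a.1 * a.2 = b.1 * b.2) {l : FlatLayout}
    (h : List.Chain (fun p q => p.1 * p.2 ∣ q.2) a l) :
    List.Chain (fun p q => p.1 * p.2 ∣ q.2) b l := by
  cases l with
  | nil => exact List.Chain.nil
  | cons q t => rcases h with _ | _ | ⟨h1, h2⟩; exact List.Chain.cons (hab ▸ h1) h2

/-- The structure theorem: a stride-sorted layout with no trivial modes whose value multiset
is `c·{0,…,size−1}` must be the canonical compact chain starting at stride `c`. -/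
theorem chain_of_msum : ∀ (L : FlatLayout) (c : ℕ), 0 < c →
    L.Pairwise (fun p q => p.2 ≤ q.2) → (∀ p ∈ L, 2 ≤ p.1) →
    msum L = (Multiset.range (size L)).map (c * ·) →
    List.Chain (fun p q => p.1 * p.2 = q.2) (1, c) L
  | [], c, _, _, _, _ => List.Chain.nil
  | (t, e) :: rest, c, hc, hsort, hsh, heq => by
    have ht2 : 2 ≤ t := hsh (t, e) (by simp)
    have hrest_sh : ∀ p ∈ rest, 2 ≤ p.1 := fun p hp => hsh p (by simp [hp])
    have hrest_sorted : rest.Pairwise (fun p q => p.2 ≤ q.2) := (List.pairwise_cons.1 hsort).2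
    have hestrides : ∀ p ∈ rest, e ≤ p.2 := fun p hp => (List.pairwise_cons.1 hsort).1 p hp
    have hval_rest : Valid rest := fun p hp => by have := hrest_sh p hp; omega
    have hK : 0 < size rest := size_pos hval_rest
    rw [size_cons] at heq
    simp only at heq
    have h0S : 0 ∈ msum rest := zero_mem_msum hval_rest
    have htK2 : 2 ≤ t * size rest := le_trans (by omega) (Nat.mul_le_mul ht2 hK)
    -- e is positive
    have he : 0 < e := by
      by_contra hcon
      have he0 : e = 0 := by omega
      subst he0
      have hcnt : Multiset.count 0 (msum ((t, 0) :: rest)) =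
          t * Multiset.count 0 (msum rest) := by
        rw [msum_cons, Multiset.count_bind]
        have : Multiset.map (fun r => Multiset.count 0 ((msum rest).map (r * 0 + ·)))
            (Multiset.range t) =
            Multiset.map (fun _ => Multiset.count 0 (msum rest)) (Multiset.range t) := by
          apply Multiset.map_congr rfl
          intro r _
          congr 1
          have hzz : (msum rest).map (r * 0 + ·) = (msum rest).map id :=
            Multiset.map_congr rfl fun z _ => by simp
          rw [hzz, Multiset.map_id]
        rw [this]
        simp [Multiset.map_const', Multiset.sum_replicate]
      have h1 : 1 ≤ Multiset.count 0 (msum rest) :=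
        Multiset.one_le_count_iff_mem.2 h0S
      have hnod : (((Multiset.range (t * size rest)).map (c * ·)) : Multiset ℕ).Nodup :=
        Multiset.Nodup.map (fun a b hab => Nat.eq_of_mul_eq_mul_left hc hab) (Multiset.nodup_range _)
      have hle1 : Multiset.count 0 (((Multiset.range (t * size rest)).map (c * ·))) ≤ 1 :=
        Multiset.nodup_iff_count_le_one.1 hnod 0
      rw [← heq] at hle1
      rw [hcnt] at hle1
      nlinarith
    -- e ∈ values, hence c ∣ e and c ≤ e
    have heL : e ∈ (Multiset.range (t * size rest)).map (c * ·) := by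
      rw [← heq, msum_cons]
      simp only [Multiset.mem_bind, Multiset.mem_map, Multiset.mem_range]
      exact ⟨1, by omega, 0, h0S, by omega⟩
    have hce : c ∣ e := by
      simp only [Multiset.mem_map, Multiset.mem_range] at heL
      obtain ⟨q, _, hq⟩ := heL
      exact ⟨q, hq.symm⟩
    have hcle : c ≤ e := Nat.le_of_dvd he hce
    -- c ∈ values, hence e ≤ c
    have hcR : c ∈ (Multiset.range (t * size rest)).map (c * ·) := by
      simp only [Multiset.mem_map, Multiset.mem_range]
      exact ⟨1, by omega, by omega⟩
    rw [← heq, msum_cons] at hcR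
    simp only [Multiset.mem_bind, Multiset.mem_map, Multiset.mem_range] at hcR
    obtain ⟨r, hr, z, hz, hrz⟩ := hcR
    have hec : e ≤ c := by
      rcases msum_lb hestrides z hz with rfl | hez
      · rcases Nat.eq_zero_or_pos r with rfl | hr0
        · omega
        · have : e ≤ r * e := Nat.le_mul_of_pos_left e hr0
          omega
      · omega
    have hec' : e = c := le_antisymm hec hcle
    subst hec'
    -- every value of the tail is divisible by e (= c)
    have hdvdS : ∀ z ∈ msum rest, e ∣ z := by
      intro z hz'
      have hmem : z ∈ (Multiset.range (t * size rest)).map (e * ·) := by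
        rw [← heq, msum_cons]
        simp only [Multiset.mem_bind, Multiset.mem_map, Multiset.mem_range]
        exact ⟨0, by omega, z, hz', by omega⟩
      simp only [Multiset.mem_map, Multiset.mem_range] at hmem
      obtain ⟨q, _, hq⟩ := hmem
      exact ⟨q, hq.symm⟩
    have hS : msum rest = ((msum rest).map (· / e)).map (e * ·) := by
      rw [Multiset.map_map]
      symm
      have : Multiset.map ((e * ·) ∘ (· / e)) (msum rest) = Multiset.map id (msum rest) :=
        Multiset.map_congr rfl fun z hz' => by
          simp only [Function.comp_def, id]
          exact Nat.mul_div_cancel' (hdvdS z hz')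
      rw [this, Multiset.map_id]
    set S' := (msum rest).map (· / e) with hS'def
    have h4 : ((Multiset.range t).bind fun r => S'.map (r + ·)) =
        Multiset.range (t * size rest) := by
      apply Multiset.map_injective (fun a b hab => by
        have : e * a = e * b := hab
        exact Nat.eq_of_mul_eq_mul_left he this : Function.Injective (e * ·))
      rw [Multiset.map_bind]
      have hlhs : (Multiset.range t).bind (fun r => Multiset.map (e * ·) (S'.map (r + ·))) =
          (Multiset.range t).bind fun r => (S'.map (e * ·)).map (r * e + ·) := by
        apply Multiset.bind_congr; intro r _
        simp only [Multiset.map_map, Function.comp_def]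
        exact Multiset.map_congr rfl fun z _ => by ring
      rw [hlhs, ← hS, ← msum_cons, heq]
    have h5 := tiling (by omega : 0 < t) (size rest) S' h4
    have hSfin : msum rest = (Multiset.range (size rest)).map ((e * t) * ·) := by
      rw [hS, h5, Multiset.map_map]
      exact Multiset.map_congr rfl fun x _ => by simp [Function.comp_def]; ring
    have hchain := chain_of_msum rest (e * t) (by positivity) hrest_sorted hrest_sh hSfin
    exact List.Chain.cons (by omega) (chain_head_eq (by simp; ring) hchain)

/-- Converse: a canonical chain starting at stride `c` has value multiset `c·{0,…,size−1}`. -/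
theorem msum_of_chain : ∀ (L : FlatLayout), Valid L → ∀ c : ℕ,
    List.Chain (fun p q => p.1 * p.2 = q.2) (1, c) L →
    msum L = (Multiset.range (size L)).map (c * ·)
  | [], _, c, _ => by
    have : Multiset.range (size ([] : FlatLayout)) = {0} := rfl
    simp [msum, this]
  | (t, e) :: rest, hval, c, hch => by
    have ht : 0 < t := hval (t, e) (by simp)
    have hvrest : Valid rest := fun q hq => hval q (by simp [hq])
    rcases hch with _ | _ | ⟨h1, h2⟩
    have hec : e = c := by simpa using h1.symm
    subst hec
    have h2' : List.Chain (fun p q => p.1 * p.2 = q.2) (1, e * t) rest :=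
      chain_head_eq (by simp; ring) h2
    have IH := msum_of_chain rest hvrest (e * t) h2'
    rw [msum_cons, IH, size_cons]
    simp only
    rw [range_mul' t (size rest), Multiset.map_bind]
    apply Multiset.bind_congr; intro r _
    simp only [Multiset.map_map, Function.comp_def]
    exact Multiset.map_congr rfl fun q _ => by ring

theorem chain_dvd_all : ∀ {l : FlatLayout} {a : ℕ × ℕ},
    List.Chain (fun p q => p.1 * p.2 = q.2) a l → ∀ p ∈ l, a.1 * a.2 ∣ p.2 := by
  intro l
  induction l with
  | nil => intro a _ p hp; simp at hp
  | cons b t ih =>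
    intro a h p hp
    rcases h with _ | _ | ⟨h1, h2⟩
    rcases List.mem_cons.1 hp with rfl | hp
    · exact dvd_of_eq h1
    · exact (dvd_of_eq h1).trans ((dvd_mul_left b.2 b.1).trans (ih h2 p hp))

theorem chain_pairwise : ∀ {l : FlatLayout} {a : ℕ × ℕ},
    List.Chain (fun p q => p.1 * p.2 = q.2) a l →
    l.Pairwise (fun p q => p.1 * p.2 ∣ q.2) := by
  intro l
  induction l with
  | nil => intro a _; exact List.Pairwise.nil
  | cons b t ih =>
    intro a h
    rcases h with _ | _ | ⟨h1, h2⟩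
    exact List.Pairwise.cons (chain_dvd_all h2) (ih h2)

theorem chain_dvd_size : ∀ {l : FlatLayout} {a : ℕ × ℕ},
    List.Chain (fun p q => p.1 * p.2 = q.2) a l → ∀ p ∈ l, p.1 * p.2 ∣ a.1 * a.2 * size l := by
  intro l
  induction l with
  | nil => intro a _ p hp; simp at hp
  | cons b t ih =>
    intro a h p hp
    rcases h with _ | _ | ⟨h1, h2⟩
    have hkey : a.1 * a.2 * size (b :: t) = b.1 * b.2 * size t := by
      rw [size_cons, h1]; ring
    rcases List.mem_cons.1 hp with rfl | hp
    · rw [hkey]; exact dvd_mul_right _ _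
    · rw [hkey]; exact ih h2 p hp

instance : IsAntisymm (ℕ × ℕ) ModeLE :=
  ⟨fun a b h1 h2 => by
    unfold ModeLE at h1 h2
    exact Prod.ext (by omega) (by omega)⟩

theorem sortL_perm (L : FlatLayout) : (sortL L).Perm L := List.mergeSort_perm L _

theorem sortL_pairwise (L : FlatLayout) : (sortL L).Pairwise ModeLE := by
  have h := List.pairwise_mergeSort (le := fun p q : ℕ × ℕ => decide (ModeLE p q))
    (fun a b c h1 h2 => by
      simp only [decide_eq_true_eq] at h1 h2 ⊢
      unfold ModeLE at h1 h2 ⊢; omega)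
    (fun a b => by
      simp only [Bool.or_eq_true, decide_eq_true_eq]
      unfold ModeLE; omega) L
  exact h.imp fun h' => of_decide_eq_true h'

theorem sortL_strides (L : FlatLayout) :
    (sortL L).Pairwise (fun p q : ℕ × ℕ => p.2 ≤ q.2) :=
  (sortL_pairwise L).imp fun h => by unfold ModeLE at h; omega

theorem strides_dvd {N : ℕ} : ∀ l : FlatLayout,
    l.Chain' (fun p q => p.1 * p.2 ∣ q.2) →
    (∀ p, l.getLast? = some p → p.1 * p.2 ∣ N) → ∀ q ∈ l, q.2 ∣ N := by
  intro l
  induction l with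
  | nil => intro _ _ q hq; simp at hq
  | cons p t ih =>
    intro hch hlast q hq
    cases t with
    | nil =>
      rcases List.mem_cons.1 hq with rfl | hq'
      · exact (dvd_mul_left q.2 q.1).trans (hlast q (by simp))
      · simp at hq'
    | cons p2 t2 =>
      have hR : p.1 * p.2 ∣ p2.2 := (List.isChain_cons_cons.1 hch).1
      have hch2 := (List.isChain_cons_cons.1 hch).2
      have hlast2 : ∀ r, (p2 :: t2).getLast? = some r → r.1 * r.2 ∣ N := fun r hr =>
        hlast r (by rw [List.getLast?_cons_cons]; exact hr)
      have IH := ih hch2 hlast2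
      rcases List.mem_cons.1 hq with rfl | hq'
      · exact ((dvd_mul_left q.2 q.1).trans hR).trans (IH p2 (by simp))
      · exact IH q hq'

/-- The modes of the `N`-complement, given the sorted squeezed modes of `A`. -/
def mkComp (N : ℕ) : ℕ → FlatLayout → FlatLayout
  | c, [] => [(N / c, c)]
  | c, (s, d) :: t => (d / c, c) :: mkComp N (s * d) t

/-- Interleaving of the sorted squeezed modes of `A` with the complement modes. -/
def itl (N : ℕ) : ℕ → FlatLayout → FlatLayout
  | c, [] => [(N / c, c)]
  | c, (s, d) :: t => (d / c, c) :: (s, d) :: itl N (s * d) t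

theorem itl_perm (N : ℕ) : ∀ (l : FlatLayout) (c : ℕ),
    (l ++ mkComp N c l).Perm (itl N c l)
  | [], c => by simp [mkComp, itl]
  | (s, d) :: t, c => by
    simp only [mkComp, itl, List.cons_append]
    refine (List.Perm.cons _ List.perm_middle).trans ?_
    refine (List.Perm.swap _ _ _).trans ?_
    exact ((itl_perm N t (s * d)).cons _).cons _

theorem itl_good (N : ℕ) (hN : 0 < N) : ∀ (l : FlatLayout) (c : ℕ), 0 < c →
    (∀ p ∈ l, 0 < p.1) → (∀ p ∈ l, 0 < p.2) →
    List.Chain (fun p q => p.1 * p.2 ∣ q.2) (1, c) l →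
    (∀ p, l.getLast? = some p → p.1 * p.2 ∣ N) →
    (l = [] → c ∣ N) →
    List.Chain (fun p q => p.1 * p.2 = q.2) (1, c) (itl N c l) ∧
    size (itl N c l) * c = N ∧ Valid (mkComp N c l)
  | [], c, hc, _, _, _, _, hnil => by
    have hcN : c ∣ N := hnil rfl
    refine ⟨?_, ?_, ?_⟩
    · exact List.Chain.cons (one_mul c) List.Chain.nil
    · show size [(N / c, c)] * c = N
      rw [size_cons]
      simp only [size_nil, mul_one]
      exact Nat.div_mul_cancel hcN
    · intro p hp
      simp only [mkComp, List.mem_singleton] at hp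
      subst hp
      exact Nat.div_pos (Nat.le_of_dvd hN hcN) hc
  | (s, d) :: t, c, hc, hsh, hst, hch, hlast, _ => by
    rcases hch with _ | _ | ⟨h1, h2⟩
    have hcd : c ∣ d := by simpa using h1
    have hs : 0 < s := hsh (s, d) (by simp)
    have hd : 0 < d := hst (s, d) (by simp)
    have h2' : List.Chain (fun p q => p.1 * p.2 ∣ q.2) (1, s * d) t :=
      chain_head_dvd (by simp) h2
    have hlast' : ∀ p, t.getLast? = some p → p.1 * p.2 ∣ N := by
      intro p hp
      cases t with
      | nil => simp at hp
      | cons a b => exact hlast p (by rw [List.getLast?_cons_cons]; exact hp)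
    have hnil' : t = [] → s * d ∣ N := by
      rintro rfl
      exact hlast (s, d) (by simp)
    obtain ⟨ih1, ih2, ih3⟩ := itl_good N hN t (s * d) (by positivity)
      (fun p hp => hsh p (by simp [hp])) (fun p hp => hst p (by simp [hp])) h2' hlast' hnil'
    refine ⟨?_, ?_, ?_⟩
    · exact List.Chain.cons (one_mul c)
        (List.Chain.cons (Nat.div_mul_cancel hcd) (chain_head_eq (by simp) ih1))
    · show size ((d / c, c) :: (s, d) :: itl N (s * d) t) * c = N
      rw [size_cons, size_cons]
      simp only
      calc d / c * (s * size (itl N (s * d) t)) * c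
          = (d / c * c) * (s * size (itl N (s * d) t)) := by ring
        _ = size (itl N (s * d) t) * (s * d) := by rw [Nat.div_mul_cancel hcd]; ring
        _ = N := ih2
    · intro p hp
      rcases List.mem_cons.1 hp with rfl | hp'
      · exact Nat.div_pos (Nat.le_of_dvd hd hcd) hc
      · exact ih3 p hp'



end FlatLayout

open FlatLayout in
theorem exists_NComplement_iff (A : FlatLayout) (N : ℕ) (hA : A.Valid) (hN : 0 < N) :
    (∃ B : FlatLayout, B.Valid ∧ IsNComplement A B N) ↔ NComplementable A N := by
  constructor
  · rintro ⟨B, hBval, hperp, hsizeN⟩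
    have hABval : Valid (A ++ B) := fun p hp => (List.mem_append.1 hp).elim (hA p) (hBval p)
    have hmsum : msum (A ++ B) = Multiset.range (cosize (A ++ B)) :=
      (compact_iff hABval).1 hperp
    have hcard : size (A ++ B) = cosize (A ++ B) := by
      have h := congrArg Multiset.card hmsum
      rw [card_msum] at h
      simpa using h
    have hsAB : size (A ++ B) = N := by rw [size_append]; exact hsizeN
    have hFperm : (sortL (squeeze (A ++ B))).Perm (squeeze (A ++ B)) := sortL_perm _
    have hmsF : msum (sortL (squeeze (A ++ B))) = Multiset.range N := by
      rw [msum_perm hFperm, msum_squeeze, hmsum, ← hcard, hsAB]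
    have hFsize : size (sortL (squeeze (A ++ B))) = N := by
      rw [size_perm hFperm, size_squeeze hABval, hsAB]
    have hFsh : ∀ p ∈ sortL (squeeze (A ++ B)), 2 ≤ p.1 := by
      intro p hp
      have hp' : p ∈ squeeze (A ++ B) := hFperm.mem_iff.1 hp
      have h1 := hABval p (List.mem_of_mem_filter hp')
      have h2 : p.1 ≠ 1 := by simpa using List.of_mem_filter hp'
      omega
    have hchainF : List.Chain (fun p q => p.1 * p.2 = q.2) (1, 1)
        (sortL (squeeze (A ++ B))) := by
      apply chain_of_msum _ 1 one_pos (sortL_strides _) hFsh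
      rw [hFsize, hmsF]
      have : Multiset.map (fun x => 1 * x) (Multiset.range N) =
          Multiset.map id (Multiset.range N) := Multiset.map_congr rfl fun x _ => by simp
      rw [this, Multiset.map_id]
    have hsubp : List.Subperm (sortL (squeeze A)) (sortL (squeeze (A ++ B))) := by
      have h1 : (sortL (squeeze A)).Perm (squeeze A) := sortL_perm _
      have h2 : List.Sublist (squeeze A) (squeeze (A ++ B)) := by
        rw [squeeze_append]; exact List.sublist_append_left _ _
      exact (h1.subperm).trans ((h2.subperm).trans hFperm.symm.subperm)
    have hsl : List.Sublist (sortL (squeeze A)) (sortL (squeeze (A ++ B))) :=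
      List.sublist_of_subperm_of_pairwise hsubp (sortL_pairwise _) (sortL_pairwise _)
    constructor
    · exact (List.Pairwise.sublist hsl (chain_pairwise hchainF)).isChain
    · intro p hp
      have hpF : p ∈ sortL (squeeze (A ++ B)) :=
        hsl.subset (List.mem_of_getLast? hp)
      have h := chain_dvd_size hchainF p hpF
      rw [hFsize] at h
      simpa using h
  · rintro ⟨hch', hlast⟩
    have hlperm : (sortL (squeeze A)).Perm (squeeze A) := sortL_perm _
    have hlsh : ∀ p ∈ sortL (squeeze A), 0 < p.1 :=
      fun p hp => hA p (List.mem_of_mem_filter (hlperm.mem_iff.1 hp))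
    have hchain1 : List.Chain (fun p q => p.1 * p.2 ∣ q.2) (1, 1) (sortL (squeeze A)) := by
      cases hl' : sortL (squeeze A) with
      | nil => exact List.Chain.nil
      | cons p t =>
        refine List.Chain.cons (one_dvd _) ?_
        have := hch'
        rw [hl'] at this
        exact this
    have hlst : ∀ p ∈ sortL (squeeze A), 0 < p.2 := by
      intro p hp
      have hdvd := strides_dvd (N := N) _ hch' hlast p hp
      rcases Nat.eq_zero_or_pos p.2 with h0 | h
      · exfalso
        rw [h0] at hdvd
        have := Nat.eq_zero_of_zero_dvd hdvd
        omega
      · exact h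
    obtain ⟨hchE, hsizeI, hmkvalid⟩ := itl_good N hN (sortL (squeeze A)) 1 one_pos
      hlsh hlst hchain1 hlast (fun _ => one_dvd N)
    set B := mkComp N 1 (sortL (squeeze A)) with hB
    have hABval : Valid (A ++ B) := fun p hp =>
      (List.mem_append.1 hp).elim (hA p) (hmkvalid p)
    have hitlval : Valid (itl N 1 (sortL (squeeze A))) :=
      valid_of_perm (itl_perm N _ 1) fun p hp =>
        (List.mem_append.1 hp).elim (hlsh p) (hmkvalid p)
    have hsitl : size (itl N 1 (sortL (squeeze A))) = N := by
      have := hsizeI; omega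
    have hmsitl : msum (itl N 1 (sortL (squeeze A))) = Multiset.range N := by
      rw [msum_of_chain _ hitlval 1 hchE, hsitl]
      have : Multiset.map (fun x => 1 * x) (Multiset.range N) =
          Multiset.map id (Multiset.range N) := Multiset.map_congr rfl fun x _ => by simp
      rw [this, Multiset.map_id]
    have hAeq : msum A = msum (sortL (squeeze A)) :=
      ((msum_squeeze A).symm).trans (msum_perm hlperm).symm
    have hmsAB : msum (A ++ B) = Multiset.range N := by
      rw [msum_append, hAeq, ← msum_append, msum_perm (itl_perm N _ 1), hmsitl]
    have hcoAB : cosize (A ++ B) = N := by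
      have h1 : cosize (A ++ B) - 1 ∈ Multiset.range N := by
        rw [← hmsAB]; exact cosize_pred_mem hABval
      have h2 : N - 1 ∈ msum (A ++ B) := by
        rw [hmsAB]; exact Multiset.mem_range.2 (by omega)
      have h3 := msum_lt_cosize hABval _ h2
      have h4 := Multiset.mem_range.1 h1
      have h5 := cosize_pos (A ++ B)
      omega
    refine ⟨B, hmkvalid, ?_, ?_⟩
    · show Compact (A ++ B)
      exact (compact_iff hABval).2 (by rw [hmsAB, hcoAB])
    · have h1 : size (A ++ B) = size (itl N 1 (sortL (squeeze A))) := by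
        rw [← size_perm (itl_perm N _ 1), size_append, size_append,
          ← size_squeeze hA, ← size_perm hlperm]
      rw [← size_append, h1, hsitl]
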